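/- Let f: [0, ∞) → ℝ be continuous and convex with f(u) = u·f(1/u) for all u > 0, and extend f by f(u) = +∞ for u < 0. Define Ψ(β) := f*(-β), where f* is the convex conjugate. Then for every u > 0 and every v₁ in the subdifferential ∂f(u), we have Ψ(Ψ(-v₁)) = -v₁. -/

import Mathlib

private lemma aux_sup (f : ℝ → ℝ) (c p : ℝ) (hp : 0 ≤ p)
    (h : ∀ w : ℝ, 0 ≤ w → f p + c * (w - p) ≤ f w) :
    sSup {x : ℝ | ∃ v : ℝ, 0 ≤ v ∧ x = -(-c) * v - f v} = c * p - f p := by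
  apply IsGreatest.csSup_eq
  constructor
  · exact ⟨p, hp, by ring⟩
  · rintro x ⟨v, hv, rfl⟩
    have := h v hv
    nlinarith [h v hv]

/-- Key step of Corollary 3 ((c) ⇒ (a)): if `f : [0,∞) → ℝ` is continuous,
convex, and satisfies `f(u) = u·f(1/u)` for `u > 0` (extended by `+∞` on
`(-∞,0)`, so that the conjugate is a supremum over `v ≥ 0`), then
`Ψ(β) := f*(-β)` satisfies `Ψ(Ψ(-v₁)) = -v₁` for every `u > 0` and every
subgradient `v₁ ∈ ∂f(u)`. -/
theorem stmt_14 (f : ℝ → ℝ)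
    (hconv : ConvexOn ℝ (Set.Ici (0 : ℝ)) f)
    (hcont : ContinuousOn f (Set.Ici (0 : ℝ)))
    (hsym : ∀ u : ℝ, 0 < u → f u = u * f (1 / u))
    (Ψ : ℝ → ℝ)
    (hΨ : ∀ β : ℝ, Ψ β = sSup {x : ℝ | ∃ v : ℝ, 0 ≤ v ∧ x = -β * v - f v}) :
    ∀ u : ℝ, 0 < u → ∀ v₁ : ℝ,
      (∀ w : ℝ, 0 ≤ w → f u + v₁ * (w - u) ≤ f w) →
      Ψ (Ψ (-v₁)) = -v₁ := by
  intro u hu v₁ hsub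
  have hu' : u ≠ 0 := ne_of_gt hu
  have hfinv : f (1 / u) = f u / u := by
    rw [hsym u hu]; field_simp
  -- core inequality for positive w
  have hpos : ∀ w : ℝ, 0 < w → w * f u + v₁ - v₁ * u * w ≤ f w := by
    intro w hw
    have h1 := hsub (1 / w) (by positivity)
    have hfw : f w = w * f (1 / w) := hsym w hw
    have hw1 : w * (1 / w) = 1 := by field_simp
    have h2 : w * (f u + v₁ * (1 / w - u)) ≤ w * f (1 / w) :=
      mul_le_mul_of_nonneg_left h1 hw.le
    have h3 : w * (f u + v₁ * (1 / w - u)) = w * f u + v₁ - v₁ * u * w := by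
      field_simp; ring
    linarith [h3 ▸ h2, hfw.ge]
  -- limit case w = 0
  have hkey : v₁ ≤ f 0 := by
    have hft : Filter.Tendsto f (nhdsWithin 0 (Set.Ioi 0)) (nhds (f 0)) :=
      (hcont 0 (by simp)).mono_left (nhdsWithin_mono 0 Set.Ioi_subset_Ici_self)
    have hgt : Filter.Tendsto (fun w : ℝ => w * f u + v₁ - v₁ * u * w)
        (nhdsWithin 0 (Set.Ioi 0)) (nhds v₁) := by
      have hc : Filter.Tendsto (fun w : ℝ => w * f u + v₁ - v₁ * u * w)
          (nhds 0) (nhds (0 * f u + v₁ - v₁ * u * 0)) := by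
        exact (Continuous.tendsto (by fun_prop) 0)
      simpa using hc.mono_left nhdsWithin_le_nhds
    exact le_of_tendsto_of_tendsto hgt hft (eventually_nhdsWithin_of_forall (fun w hw => hpos w hw))
  -- subgradient at 1/u
  have hsub2 : ∀ w : ℝ, 0 ≤ w → f (1 / u) + (f u - v₁ * u) * (w - 1 / u) ≤ f w := by
    intro w hw
    rcases hw.lt_or_eq with hw | hw
    · have := hpos w hw
      rw [hfinv]
      have hid : f u / u + (f u - v₁ * u) * (w - 1 / u)
          = w * f u + v₁ - v₁ * u * w := by field_simp; ring
      linarith [hid.le.trans this]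
    · rw [← hw, hfinv]
      have hid : f u / u + (f u - v₁ * u) * (0 - 1 / u) = v₁ := by
        field_simp
        ring
      linarith [hid.le]
  have hΨ1 : Ψ (-v₁) = v₁ * u - f u := by
    rw [hΨ]; exact aux_sup f v₁ u hu.le hsub
  have hΨ2 : Ψ (-(f u - v₁ * u)) = (f u - v₁ * u) * (1 / u) - f (1 / u) := by
    rw [hΨ]; exact aux_sup f (f u - v₁ * u) (1 / u) (by positivity) hsub2
  rw [hΨ1]
  have h3 : v₁ * u - f u = -(f u - v₁ * u) := by ring
  rw [h3, hΨ2, hfinv]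
  field_simp
  ring
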